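/- Let σ₀ = [] and σ_n = step(σ_{n−1}) for n ≥ 1 in the deamortized log-structured merging process. For every n ≥ 0, the configuration σ_n satisfies: (i) no three consecutive entries of σ_n have equal exponents (there are never more than two adjacent segments of the same size); (ii) for each natural number e, at most one entry of σ_n has exponent e and a nonzero counter (at most one merge is in progress per segment size); and (iii) the exponents of the entries of σ_n are non-increasing from left to right. -/

import Mathlib

/-- `complete` on configurations: `complete [] = []`;
`complete ((e₁,c₁) :: (e₂,1) :: L) = (e₂+1, 0) :: complete L` when the list has at
least two entries and the second entry has counter exactly `1`; in all other cases
`complete ((e,c) :: L) = (e, c - 1) :: complete L` (truncated subtraction). -/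
def complete : List (ℕ × ℕ) → List (ℕ × ℕ)
  | [] => []
  | [(e, c)] => [(e, c - 1)]
  | (e₁, c₁) :: (e₂, c₂) :: L =>
    if c₂ = 1 then (e₂ + 1, 0) :: complete L
    else (e₁, c₁ - 1) :: complete ((e₂, c₂) :: L)

/-- `start` on configurations: `start [] = []`;
`start ((e,0) :: (e,0) :: L) = (e,0) :: (e, 2^e) :: start L` when the first two
entries have equal exponents and both counters zero; in all other cases
`start (x :: L) = x :: start L`. -/
def start : List (ℕ × ℕ) → List (ℕ × ℕ)
  | [] => []
  | [x] => [x]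
  | (e₁, c₁) :: (e₂, c₂) :: L =>
    if e₁ = e₂ ∧ c₁ = 0 ∧ c₂ = 0 then (e₁, 0) :: (e₁, 2 ^ e₁) :: start L
    else (e₁, c₁) :: start ((e₂, c₂) :: L)

/-- One step of the deamortized log-structured merging process. -/
def step (σ : List (ℕ × ℕ)) : List (ℕ × ℕ) := start (complete σ ++ [(0, 0)])

/-- The configuration after `n` characters: `σ₀ = []`, `σ_n = step σ_{n-1}`. -/
def conf : ℕ → List (ℕ × ℕ)
  | 0 => []
  | n + 1 => step (conf n)


def F : ℕ → List (ℕ × ℕ)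
  | 0 => []
  | n+1 =>
    let k := Nat.log 2 (n+2) - 1
    if n+2 < 3 * 2^k then (k,0) :: F (n+1 - 2^k)
    else (k,0) :: (k, 2^(k+2) - 1 - (n+1)) :: F (n+1 - 2^(k+1))
termination_by n => n
decreasing_by
  all_goals
    first
    | (have : 0 < 2 ^ (Nat.log 2 (n+2) - 1) := Nat.pow_pos (by norm_num); omega)
    | (have : 0 < 2 ^ (Nat.log 2 (n+2) - 1 + 1) := Nat.pow_pos (by norm_num); omega)

lemma k_unique {x e k : ℕ} (h1 : 2^(e+1) ≤ x) (h2 : x < 2^(e+2))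
    (h3 : 2^(k+1) ≤ x) (h4 : x < 2^(k+2)) : e = k := by
  rcases lt_trichotomy e k with h | h | h
  · have : 2^(e+2) ≤ 2^(k+1) := Nat.pow_le_pow_right (by norm_num) (by omega)
    omega
  · exact h
  · have : 2^(k+2) ≤ 2^(e+1) := Nat.pow_le_pow_right (by norm_num) (by omega)
    omega

lemma log_eq {n k : ℕ} (h1 : 2^(k+1) ≤ n+1) (h2 : n+1 < 2^(k+2)) :
    Nat.log 2 (n+1) - 1 = k := by
  have := Nat.log_eq_of_pow_le_of_lt_pow h1 h2
  omega

lemma F_eqA {n k : ℕ} (h1 : 2^(k+1) ≤ n+1) (h2 : n+1 < 3 * 2^k) :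
    F n = (k,0) :: F (n - 2^k) := by
  have hp : 0 < 2^k := Nat.pow_pos (by norm_num)
  have hn : n ≠ 0 := by
    intro h; subst h
    have : 2 ≤ 2^(k+1) := by
      have : 2^1 ≤ 2^(k+1) := Nat.pow_le_pow_right (by norm_num) (by omega)
      simpa using this
    omega
  obtain ⟨m, rfl⟩ : ∃ m, n = m + 1 := ⟨n - 1, by omega⟩
  rw [F]
  have hk2 : m+2 < 2^(k+2) := by
    have : 3 * 2^k < 2^(k+2) := by rw [pow_succ, pow_succ]; omega
    omega
  rw [show m + 1 + 1 = m + 2 from rfl, log_eq (n := m+1) h1 hk2]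
  simp only [if_pos h2]

lemma F_eqB {n k : ℕ} (h1 : 3 * 2^k ≤ n+1) (h2 : n+1 < 2^(k+2)) :
    F n = (k,0) :: (k, 2^(k+2) - 1 - n) :: F (n - 2^(k+1)) := by
  have hp : 0 < 2^k := Nat.pow_pos (by norm_num)
  have hn : n ≠ 0 := by omega
  obtain ⟨m, rfl⟩ : ∃ m, n = m + 1 := ⟨n - 1, by omega⟩
  rw [F]
  have hk1 : 2^(k+1) ≤ m+2 := by
    have : 2^(k+1) ≤ 3 * 2^k := by rw [pow_succ]; omega
    omega
  rw [show m + 1 + 1 = m + 2 from rfl, log_eq (n := m+1) hk1 h2]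
  simp only [if_neg (by omega : ¬ m + 2 < 3 * 2^k)]

lemma exists_k {n : ℕ} (h : n ≠ 0) : ∃ k, 2^(k+1) ≤ n+1 ∧ n+1 < 2^(k+2) := by
  refine ⟨Nat.log 2 (n+1) - 1, ?_, ?_⟩
  · have h1 : 1 ≤ Nat.log 2 (n+1) := Nat.le_log_of_pow_le (by norm_num) (by omega)
    have := Nat.pow_log_le_self 2 (show n+1 ≠ 0 by omega)
    rwa [show Nat.log 2 (n+1) - 1 + 1 = Nat.log 2 (n+1) by omega]
  · have h1 : 1 ≤ Nat.log 2 (n+1) := Nat.le_log_of_pow_le (by norm_num) (by omega)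
    have := Nat.lt_pow_succ_log_self (show 1 < 2 by norm_num) (n+1)
    rwa [show Nat.log 2 (n+1) - 1 + 2 = Nat.log 2 (n+1) + 1 by omega]

lemma complete_cons_ne (e₁ c₁ e₂ c₂ : ℕ) (L : List (ℕ × ℕ)) (h : c₂ ≠ 1) :
    complete ((e₁,c₁) :: (e₂,c₂) :: L) = (e₁, c₁ - 1) :: complete ((e₂,c₂) :: L) := by
  rw [complete, if_neg h]

lemma complete_cons_eq (e₁ c₁ e₂ : ℕ) (L : List (ℕ × ℕ)) :
    complete ((e₁,c₁) :: (e₂,1) :: L) = (e₂+1, 0) :: complete L := by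
  rw [complete, if_pos rfl]

lemma start_cons_pos (e₁ : ℕ) (L : List (ℕ × ℕ)) :
    start ((e₁,0) :: (e₁,0) :: L) = (e₁,0) :: (e₁, 2^e₁) :: start L := by
  rw [start, if_pos ⟨rfl, rfl, rfl⟩]

lemma start_cons_neg (e₁ c₁ e₂ c₂ : ℕ) (L : List (ℕ × ℕ))
    (h : ¬ (e₁ = e₂ ∧ c₁ = 0 ∧ c₂ = 0)) :
    start ((e₁,c₁) :: (e₂,c₂) :: L) = (e₁,c₁) :: start ((e₂,c₂) :: L) := by
  rw [start, if_neg h]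

lemma start_head (L : List (ℕ × ℕ)) : (start L).head? = L.head? := by
  match L with
  | [] => rfl
  | [x] => rfl
  | (e₁,c₁) :: (e₂,c₂) :: L =>
    by_cases h : e₁ = e₂ ∧ c₁ = 0 ∧ c₂ = 0
    · rw [start, if_pos h]; simp [h.2.1]
    · rw [start, if_neg h]; rfl

lemma F_head {n : ℕ} (h : n ≠ 0) :
    ∃ e L, F n = (e, 0) :: L ∧ 2^(e+1) ≤ n+1 ∧ n+1 < 2^(e+2) := by
  obtain ⟨k, hk1, hk2⟩ := exists_k h
  by_cases hA : n+1 < 3 * 2^k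
  · exact ⟨k, _, F_eqA hk1 hA, hk1, hk2⟩
  · exact ⟨k, _, F_eqB (by omega) hk2, hk1, hk2⟩

lemma F_bound : ∀ n, ∀ p ∈ F n, 2^(p.1+1) ≤ n+1 := by
  intro n
  induction n using Nat.strong_induction_on with
  | _ n IH =>
    rcases eq_or_ne n 0 with rfl | hn
    · intro p hp; simp [F] at hp
    obtain ⟨k, hk1, hk2⟩ := exists_k hn
    have hp2 : 0 < 2^k := Nat.pow_pos (by norm_num)
    by_cases hA : n+1 < 3 * 2^k
    · rw [F_eqA hk1 hA]
      intro p hp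
      rw [List.mem_cons] at hp
      rcases hp with rfl | hp
      · exact hk1
      · have := IH (n - 2^k) (by omega) p hp
        omega
    · rw [F_eqB (by omega) hk2]
      have h21 : 2^(k+1) = 2 * 2^k := by rw [pow_succ]; ring
      intro p hp
      rw [List.mem_cons, List.mem_cons] at hp
      rcases hp with rfl | rfl | hp
      · exact hk1
      · exact hk1
      · have := IH (n - 2^(k+1)) (by omega) p hp
        omega

lemma start_cons_pos' (e₁ c₁ e₂ c₂ : ℕ) (L : List (ℕ × ℕ))
    (h : e₁ = e₂ ∧ c₁ = 0 ∧ c₂ = 0) :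
    start ((e₁,c₁) :: (e₂,c₂) :: L) = (e₁,0) :: (e₁, 2^e₁) :: start L := by
  rw [start, if_pos h]

lemma step_F : ∀ n, step (F n) = F (n+1) := by
  intro n
  induction n using Nat.strong_induction_on with
  | _ n IH =>
  rcases eq_or_ne n 0 with rfl | hn
  · have hF0 : F 0 = [] := by rw [F]
    have hF1 : F 1 = [(0,0)] := by
      rw [F_eqA (k := 0) (by norm_num) (by norm_num)]; simp [hF0]
    rw [hF0, hF1]; rfl
  obtain ⟨k, hk1, hk2⟩ := exists_k hn
  have h2k : 0 < 2^k := Nat.pow_pos (by norm_num)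
  have e21 : 2^(k+1) = 2*2^k := by rw [pow_succ]; omega
  have e22 : 2^(k+2) = 4*2^k := by rw [pow_succ, pow_succ]; omega
  by_cases hA : n+1 < 3*2^k
  · -- Case A
    have hFn : F n = (k,0) :: F (n - 2^k) := F_eqA hk1 hA
    set m := n - 2^k with hm
    rcases eq_or_ne m 0 with hm0 | hm0
    · -- n = 2^k, forces k = 0, n = 1
      have hk0 : k = 0 := by
        by_contra hk0
        have : 2^1 ≤ 2^k := Nat.pow_le_pow_right (by norm_num) (by omega)
        simp only [pow_one] at this
        omega
      have hn1 : n = 1 := by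
        have hp1 : 2^k = 1 := by rw [hk0]; rfl
        omega
      subst hn1
      have hF0 : F 0 = [] := by rw [F]
      have hF1 : F 1 = [(0,0)] := by
        rw [F_eqA (k := 0) (by norm_num) (by norm_num)]; simp [hF0]
      have hF2 : F 2 = [(0,0),(0,1)] := by
        rw [F_eqB (k := 0) (by norm_num) (by norm_num)]; simp [hF0]
      rw [hF1, hF2]
      show start (complete [(0,0)] ++ [(0,0)]) = _
      rw [show complete [(0,0)] = [(0,0)] by rw [complete]]
      show start [(0,0),(0,0)] = _
      rw [start_cons_pos]
      simp [start]
    · -- m ≥ 1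
      have hmlt : m < n := by omega
      obtain ⟨e₀, L₀, hFm, _, _⟩ := F_head hm0
      have hcomp : complete (F n) = (k,0) :: complete (F m) := by
        rw [hFn, hFm, complete_cons_ne _ _ _ _ _ (by norm_num), ← hFm]
      have hstep : step (F n) = start ((k,0) :: (complete (F m) ++ [(0,0)])) := by
        rw [step, hcomp]; rfl
      have hstartD : start (complete (F m) ++ [(0,0)]) = F (m+1) := by
        have := IH m hmlt; rwa [step] at this
      obtain ⟨e₁, L₁, hFm1, he1a, he1b⟩ := F_head (Nat.succ_ne_zero m)
      have hDhead : (complete (F m) ++ [(0,0)]).head? = some (e₁, 0) := by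
        rw [← start_head, hstartD, hFm1]; rfl
      obtain ⟨d, D', hDcons⟩ := List.exists_cons_of_ne_nil
        (show complete (F m) ++ [(0,0)] ≠ [] by simp)
      have hd : d = (e₁, 0) := by
        rw [hDcons] at hDhead; simpa using hDhead
      subst hd
      by_cases he : e₁ = k
      · -- merge-combination case: n+1 = 3·2^k - 1
        subst he
        have hm1 : m + 2 = 2^(e₁+1) := by omega
        have hk0 : e₁ ≠ 0 := by
          intro h; rw [h] at hm1; simp at hm1; omega
        have h2k1 : 2 ≤ 2^e₁ := by
          have : 2^1 ≤ 2^e₁ := Nat.pow_le_pow_right (by norm_num) (by omega)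
          simpa using this
        have hFm1' : F (m+1) = (e₁,0) :: F (2^e₁ - 1) := by
          rw [F_eqA (n := m+1) (k := e₁) (by omega) (by omega),
            show m+1-2^e₁ = 2^e₁ - 1 by omega]
        obtain ⟨e₂, L₂, hFt, he2a, he2b⟩ := F_head (show 2^e₁ - 1 ≠ 0 by omega)
        rcases D' with _ | ⟨⟨a,b⟩, D''⟩
        · exfalso
          rw [hDcons] at hstartD
          rw [show start [(e₁,0)] = [(e₁,0)] by rw [start]] at hstartD
          rw [hFm1', hFt] at hstartD
          simp at hstartD
        · rw [hDcons] at hstartD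
          by_cases hab : e₁ = a ∧ (0:ℕ) = 0 ∧ b = 0
          · exfalso
            rw [start_cons_pos' _ _ _ _ _ hab] at hstartD
            rw [hFm1', hFt] at hstartD
            simp only [List.cons.injEq, Prod.mk.injEq] at hstartD
            omega
          · rw [start_cons_neg _ _ _ _ _ hab] at hstartD
            rw [hFm1'] at hstartD
            have hs2 : start ((a,b) :: D'') = F (2^e₁ - 1) := by
              exact ((List.cons.injEq _ _ _ _).mp hstartD).2
            rw [hstep, hDcons, start_cons_pos e₁ ((a,b) :: D''), hs2]
            rw [F_eqB (n := n+1) (k := e₁) (by omega) (by omega),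
              show 2^(e₁+2)-1-(n+1) = 2^e₁ by omega,
              show n+1-2^(e₁+1) = 2^e₁-1 by omega]
      · -- no combination
        have hcond : ¬ (k = e₁ ∧ (0:ℕ) = 0 ∧ (0:ℕ) = 0) := fun h => he h.1.symm
        rw [hstep, hDcons, start_cons_neg _ _ _ _ _ hcond, ← hDcons, hstartD]
        have hx : n+2 < 3*2^k := by
          by_contra h
          exact he (k_unique he1a he1b (by omega) (by omega))
        rw [F_eqA (n := n+1) (k := k) (by omega) hx,
          show n+1-2^k = m+1 by omega]
  · -- Case B
    have hc1le : 1 ≤ 2^(k+2) - 1 - n := by omega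
    have hFn : F n = (k,0) :: (k, 2^(k+2) - 1 - n) :: F (n - 2^(k+1)) :=
      F_eqB (by omega) hk2
    set c := 2^(k+2) - 1 - n with hcdef
    set m := n - 2^(k+1) with hm
    have hmlt : m < n := by omega
    have hstartD : start (complete (F m) ++ [(0,0)]) = F (m+1) := by
      have := IH m hmlt; rwa [step] at this
    obtain ⟨e₁, L₁, hFm1, he1a, he1b⟩ := F_head (Nat.succ_ne_zero m)
    have hDhead : (complete (F m) ++ [(0,0)]).head? = some (e₁, 0) := by
      rw [← start_head, hstartD, hFm1]; rfl
    obtain ⟨d, D', hDcons⟩ := List.exists_cons_of_ne_nil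
      (show complete (F m) ++ [(0,0)] ≠ [] by simp)
    have hd : d = (e₁, 0) := by
      rw [hDcons] at hDhead; simpa using hDhead
    subst hd
    by_cases hc1 : c = 1
    · -- the pending merge finishes
      have hcomp : complete (F n) = (k+1,0) :: complete (F m) := by
        rw [hFn, hc1, complete_cons_eq]
      have hstep : step (F n) = start ((k+1,0) :: (complete (F m) ++ [(0,0)])) := by
        rw [step, hcomp]; rfl
      have he : e₁ ≠ k+1 := by
        intro h
        rw [h] at he1a
        have : 2^(k+2) ≤ m+2 := he1a
        omega
      have hcond : ¬ (k+1 = e₁ ∧ (0:ℕ) = 0 ∧ (0:ℕ) = 0) := fun h => he h.1.symm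
      rw [hstep, hDcons, start_cons_neg _ _ _ _ _ hcond, ← hDcons, hstartD]
      have e23 : 2^(k+3) = 8*2^k := by rw [pow_succ, pow_succ, pow_succ]; omega
      rw [F_eqA (n := n+1) (k := k+1) (by omega) (by omega),
        show n+1-2^(k+1) = m+1 by omega]
    · -- counter just decrements
      have hc2 : 2 ≤ c := by omega
      have hk0 : k ≠ 0 := by
        intro h
        rw [h] at hcdef hA
        norm_num at hcdef hA
        omega
      have hm0 : m ≠ 0 := by
        have : 2^1 ≤ 2^k := Nat.pow_le_pow_right (by norm_num) (by omega)
        simp only [pow_one] at this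
        omega
      obtain ⟨e₀, L₀, hFm, _, _⟩ := F_head hm0
      have hcomp : complete (F n) = (k,0) :: (k,c-1) :: complete (F m) := by
        rw [hFn, hFm, complete_cons_ne _ _ _ _ _ hc1,
          complete_cons_ne _ _ _ _ _ (by norm_num), ← hFm]
      have hstep : step (F n) =
          start ((k,0) :: (k,c-1) :: (complete (F m) ++ [(0,0)])) := by
        rw [step, hcomp]; rfl
      rw [hstep, start_cons_neg _ _ _ _ _ (fun h => by omega)]
      rw [hDcons, start_cons_neg _ _ _ _ _ (fun h => by omega), ← hDcons, hstartD]
      rw [F_eqB (n := n+1) (k := k) (by omega) (by omega),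
        show 2^(k+2)-1-(n+1) = c-1 by omega,
        show n+1-2^(k+1) = m+1 by omega]

lemma conf_eq : ∀ n, conf n = F n := by
  intro n
  induction n with
  | zero => rw [conf, F]
  | succ n IH => rw [conf, IH, step_F]

lemma F_sorted : ∀ n, List.Pairwise (· ≥ ·) ((F n).map Prod.fst) := by
  intro n
  induction n using Nat.strong_induction_on with
  | _ n IH =>
  rcases eq_or_ne n 0 with rfl | hn
  · rw [F]; simp
  obtain ⟨k, hk1, hk2⟩ := exists_k hn
  have h2k : 0 < 2^k := Nat.pow_pos (by norm_num)
  have e21 : 2^(k+1) = 2*2^k := by rw [pow_succ]; omega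
  have e22 : 2^(k+2) = 4*2^k := by rw [pow_succ, pow_succ]; omega
  have key : ∀ m, m < n → ∀ b ∈ (F m).map Prod.fst, k ≥ b := by
    intro m hm b hb
    rw [List.mem_map] at hb
    obtain ⟨p, hp, rfl⟩ := hb
    have := F_bound m p hp
    by_contra hkb
    have : 2^(k+2) ≤ 2^(p.1+1) := Nat.pow_le_pow_right (by norm_num) (by omega)
    omega
  by_cases hA : n+1 < 3*2^k
  · rw [F_eqA hk1 hA]
    simp only [List.map_cons]
    rw [List.pairwise_cons]
    exact ⟨key _ (by omega), IH _ (by omega)⟩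
  · rw [F_eqB (by omega) hk2]
    simp only [List.map_cons]
    rw [List.pairwise_cons, List.pairwise_cons]
    refine ⟨?_, ?_, IH _ (by omega)⟩
    · intro b hb
      rw [List.mem_cons] at hb
      rcases hb with rfl | hb
      · exact le_refl _
      · exact key _ (by omega) _ hb
    · exact key _ (by omega)

lemma F_lt_bound {n k : ℕ} (h : n + 1 < 2^(k+1)) :
    ∀ p ∈ F n, p.1 < k := by
  intro p hp
  have h1 := F_bound n p hp
  by_contra hc
  have : 2^(k+1) ≤ 2^(p.1+1) := Nat.pow_le_pow_right (by norm_num) (by omega)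
  omega

lemma F_count : ∀ n e, (F n).countP (fun p => decide (p.1 = e ∧ p.2 ≠ 0)) ≤ 1 := by
  intro n
  induction n using Nat.strong_induction_on with
  | _ n IH =>
  intro e
  rcases eq_or_ne n 0 with rfl | hn
  · rw [F]; simp
  obtain ⟨k, hk1, hk2⟩ := exists_k hn
  have h2k : 0 < 2^k := Nat.pow_pos (by norm_num)
  have e21 : 2^(k+1) = 2*2^k := by rw [pow_succ]; omega
  have e22 : 2^(k+2) = 4*2^k := by rw [pow_succ, pow_succ]; omega
  by_cases hA : n+1 < 3*2^k
  · rw [F_eqA hk1 hA, List.countP_cons]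
    have hrec := IH (n - 2^k) (by omega) e
    rw [if_neg (by simp : ¬(decide (((k:ℕ),(0:ℕ)).1 = e ∧ ((k:ℕ),(0:ℕ)).2 ≠ 0) = true))]
    omega
  · rw [F_eqB (by omega) hk2, List.countP_cons, List.countP_cons]
    rw [if_neg (by simp : ¬(decide (((k:ℕ),(0:ℕ)).1 = e ∧ ((k:ℕ),(0:ℕ)).2 ≠ 0) = true))]
    by_cases he : e = k
    · have hz : (F (n - 2^(k+1))).countP (fun p => decide (p.1 = e ∧ p.2 ≠ 0)) = 0 := by
        rw [List.countP_eq_zero]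
        intro p hp
        have hlt := F_lt_bound (k := k) (by omega) p hp
        simp only [decide_eq_true_eq]
        rintro ⟨rfl, -⟩
        omega
      rw [hz]
      split <;> omega
    · have h2 : ¬(decide (((k:ℕ), 2^(k+2) - 1 - n).1 = e ∧
          ((k:ℕ), 2^(k+2) - 1 - n).2 ≠ 0) = true) := by
        simp only [decide_eq_true_eq]
        rintro ⟨rfl, -⟩
        exact he rfl
      rw [if_neg h2]
      have hrec := IH (n - 2^(k+1)) (by omega) e
      omega

lemma F_noTriple : ∀ n, ∀ (q : ℕ) (x y z : ℕ × ℕ),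
    (F n)[q]? = some x → (F n)[q + 1]? = some y → (F n)[q + 2]? = some z →
    ¬ (x.1 = y.1 ∧ y.1 = z.1) := by
  intro n
  induction n using Nat.strong_induction_on with
  | _ n IH =>
  intro q x y z hx hy hz
  rcases eq_or_ne n 0 with rfl | hn
  · rw [F] at hx; simp at hx
  obtain ⟨k, hk1, hk2⟩ := exists_k hn
  have h2k : 0 < 2^k := Nat.pow_pos (by norm_num)
  have e21 : 2^(k+1) = 2*2^k := by rw [pow_succ]; omega
  have e22 : 2^(k+2) = 4*2^k := by rw [pow_succ, pow_succ]; omega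
  by_cases hA : n+1 < 3*2^k
  · rw [F_eqA hk1 hA] at hx hy hz
    have hlt : ∀ p ∈ F (n - 2^k), p.1 < k := F_lt_bound (by omega)
    match q with
    | 0 =>
      simp only [List.getElem?_cons_zero, List.getElem?_cons_succ,
        Option.some.injEq] at hx hy hz
      subst hx
      have hy' : y ∈ F (n - 2^k) := List.mem_of_getElem? hy
      have := hlt y hy'
      rintro ⟨h1, -⟩
      simp at h1
      omega
    | q+1 =>
      simp only [List.getElem?_cons_succ] at hx hy hz
      exact IH _ (by omega) q x y z hx hy hz
  · rw [F_eqB (by omega) hk2] at hx hy hz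
    have hlt : ∀ p ∈ F (n - 2^(k+1)), p.1 < k := F_lt_bound (by omega)
    match q with
    | 0 =>
      simp only [List.getElem?_cons_zero, List.getElem?_cons_succ,
        Option.some.injEq] at hx hy hz
      subst hx; subst hy
      have hz' : z ∈ F (n - 2^(k+1)) := List.mem_of_getElem? hz
      have := hlt z hz'
      rintro ⟨-, h2⟩
      simp at h2
      omega
    | 1 =>
      simp only [List.getElem?_cons_zero, List.getElem?_cons_succ,
        Option.some.injEq] at hx hy hz
      subst hx
      have hy' : y ∈ F (n - 2^(k+1)) := List.mem_of_getElem? hy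
      have := hlt y hy'
      rintro ⟨h1, -⟩
      simp at h1
      omega
    | q+2 =>
      simp only [List.getElem?_cons_succ] at hx hy hz
      exact IH _ (by omega) q x y z hx hy hz

/-- For every `n`, the configuration `σ_n` satisfies:
(i) no three consecutive entries have equal exponents;
(ii) for each `e`, at most one entry has exponent `e` and a nonzero counter;
(iii) the exponents are non-increasing from left to right. -/
theorem stmt_12 (n : ℕ) :
    (∀ (q : ℕ) (x y z : ℕ × ℕ),
      (conf n)[q]? = some x → (conf n)[q + 1]? = some y → (conf n)[q + 2]? = some z →
      ¬ (x.1 = y.1 ∧ y.1 = z.1)) ∧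
    (∀ e : ℕ, (conf n).countP (fun p => decide (p.1 = e ∧ p.2 ≠ 0)) ≤ 1) ∧
    List.Pairwise (· ≥ ·) ((conf n).map Prod.fst) := by
  rw [conf_eq]
  exact ⟨F_noTriple n, F_count n, F_sorted n⟩
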